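/- Let ℓ be a prime, A an abelian group, and C a finite abelian ℓ-group. Write C[ℓ] = {c ∈ C : ℓ·c = 0}, write A/ℓA for the quotient of A by the subgroup of ℓ-th multiples, and let q : A → A/ℓA be the quotient map. Then for every group homomorphism f : C[ℓ] → A/ℓA there exists a short exact sequence of abelian groups 0 → A →ⁱ B →ᵖ C → 0 such that for every c ∈ C with ℓ·c = 0 and every b ∈ B with p(b) = c, the element ℓ·b lies in i(A) and, writing ℓ·b = i(a), one has q(a) = f(c). In other words, the connecting homomorphism δ_ℓ : C[ℓ] → A/ℓA obtained by applying Hom(ℤ/ℓℤ, −) to the extension equals f; in particular the map Ext¹(C, A) → Hom(C[ℓ], A/ℓA), Θ ↦ δ_ℓ(Θ), is surjective. -/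

import Mathlib

/-- The subgroup `C[ℓ] = {c ∈ C : ℓ·c = 0}` of an abelian group `C`. -/
def ellTorsion (ℓ : ℕ) (C : Type*) [AddCommGroup C] : AddSubgroup C where
  carrier := {c | ℓ • c = 0}
  zero_mem' := by simp
  add_mem' := by
    intro a b ha hb
    simp only [Set.mem_setOf_eq, smul_add] at *
    rw [ha, hb, add_zero]
  neg_mem' := by
    intro a ha
    simp only [Set.mem_setOf_eq, smul_neg] at *
    rw [ha, neg_zero]

/-- The subgroup `ℓA` of `ℓ`-th multiples of an abelian group `A`. -/
def ellMultiples (ℓ : ℕ) (A : Type*) [AddCommGroup A] : AddSubgroup A :=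
  (ℓ • AddMonoidHom.id A).range

lemma ell_smul_gen {ℓ n : ℕ} (hℓ : ℓ.Prime) (hn : ∃ k, n = ℓ ^ k) :
    ℓ • ((n / ℓ : ℕ) : ZMod n) = 0 := by
  obtain ⟨k, rfl⟩ := hn
  cases k with
  | zero =>
    haveI : Subsingleton (ZMod (ℓ ^ 0)) := by rw [pow_zero]; infer_instance
    exact Subsingleton.elim _ _
  | succ s =>
    have h : ℓ ^ (s + 1) / ℓ = ℓ ^ s := by
      rw [pow_succ]
      exact Nat.mul_div_cancel _ hℓ.pos
    rw [h, nsmul_eq_mul, ← Nat.cast_mul, ← pow_succ', ZMod.natCast_self]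

lemma zmod_torsion_val {ℓ n : ℕ} (hℓ : ℓ.Prime) (hn : ∃ k, n = ℓ ^ k)
    (c : ZMod n) (hc : ℓ • c = 0) :
    ∃ t : ℕ, c.val = (n / ℓ) * t ∧ ℓ * c.val = n * t := by
  obtain ⟨k, rfl⟩ := hn
  cases k with
  | zero =>
    haveI : Subsingleton (ZMod (ℓ ^ 0)) := by rw [pow_zero]; infer_instance
    have hc0 : c = 0 := Subsingleton.elim _ _
    refine ⟨0, ?_, ?_⟩ <;> rw [hc0, ZMod.val_zero] <;> simp
  | succ s =>
    haveI : NeZero (ℓ ^ (s + 1)) := ⟨pow_ne_zero _ hℓ.pos.ne'⟩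
    have h1 : ((ℓ * c.val : ℕ) : ZMod (ℓ ^ (s + 1))) = 0 := by
      push_cast
      rw [ZMod.natCast_zmod_val, ← nsmul_eq_mul, hc]
    have h2 : ℓ ^ (s + 1) ∣ ℓ * c.val := (ZMod.natCast_eq_zero_iff _ _).mp h1
    obtain ⟨t, ht⟩ := h2
    have h3 : c.val = ℓ ^ s * t := by
      refine Nat.eq_of_mul_eq_mul_left hℓ.pos ?_
      rw [ht, pow_succ']; ring
    have h4 : ℓ ^ (s + 1) / ℓ = ℓ ^ s := by
      rw [pow_succ]; exact Nat.mul_div_cancel _ hℓ.pos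
    exact ⟨t, by rw [h4]; exact h3, ht⟩

theorem aux_pi (ℓ : ℕ) (hℓ : ℓ.Prime) (A : Type) [AddCommGroup A]
    (ι : Type) [Fintype ι] [DecidableEq ι] (n : ι → ℕ) (hn : ∀ i, ∃ k, n i = ℓ ^ k)
    (f : ellTorsion ℓ (∀ i, ZMod (n i)) →+ A ⧸ ellMultiples ℓ A) :
    ∃ (B : Type) (_ : AddCommGroup B) (i : A →+ B) (p : B →+ (∀ i, ZMod (n i))),
      Function.Injective i ∧ Function.Surjective p ∧
      (∀ b : B, p b = 0 ↔ b ∈ i.range) ∧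
      ∀ (c : ∀ i, ZMod (n i)) (hc : ℓ • c = 0) (b : B), p b = c →
        ∃ a : A, i a = ℓ • b ∧
          (QuotientAddGroup.mk a : A ⧸ ellMultiples ℓ A) = f ⟨c, hc⟩ := by
  have hnz : ∀ i, n i ≠ 0 := fun i => by
    obtain ⟨k, hk⟩ := hn i; rw [hk]; exact pow_ne_zero k hℓ.pos.ne'
  haveI : ∀ i, NeZero (n i) := fun i => ⟨hnz i⟩
  -- generators of the ℓ-torsion
  set gen : ι → ellTorsion ℓ (∀ i, ZMod (n i)) := fun i =>
    ⟨Pi.single i ((n i / ℓ : ℕ) : ZMod (n i)), by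
      show ℓ • (Pi.single i ((n i / ℓ : ℕ) : ZMod (n i)) : ∀ j, ZMod (n j)) = 0
      funext j
      by_cases h : j = i
      · subst h
        simp only [Pi.smul_apply, Pi.single_eq_same, Pi.zero_apply]
        exact ell_smul_gen hℓ (hn j)
      · simp [Pi.single_eq_of_ne h]⟩ with hgen
  -- choose lifts of -f (gen i)
  have hlift : ∀ i, ∃ x : A,
      (QuotientAddGroup.mk x : A ⧸ ellMultiples ℓ A) = -(f (gen i)) := fun i =>
    Quotient.exists_rep _
  choose a ha using hlift
  -- the maps
  set μ : (ι → ℤ) →+ (ι → ℤ) := AddMonoidHom.mk' (fun v i => (n i : ℤ) * v i)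
    (by intro x y; funext i; simp [mul_add]) with hμ
  set lamA : (ι → ℤ) →+ A := AddMonoidHom.mk' (fun v => ∑ i, v i • a i)
    (by intro x y; simp [add_smul, Finset.sum_add_distrib]) with hlamA
  set h : (ι → ℤ) →+ A × (ι → ℤ) := lamA.prod μ with hh
  set S : AddSubgroup (A × (ι → ℤ)) := h.range with hS
  set π : (ι → ℤ) →+ (∀ i, ZMod (n i)) := AddMonoidHom.mk' (fun v i => ((v i : ℤ) : ZMod (n i)))
    (by intro x y; funext i; push_cast; simp) with hπ
  have hπμ : ∀ v, π (μ v) = 0 := by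
    intro v
    funext i
    show (((n i : ℤ) * v i : ℤ) : ZMod (n i)) = 0
    push_cast
    simp [ZMod.natCast_self]
  set i0 : A →+ (A × (ι → ℤ)) ⧸ S := (QuotientAddGroup.mk' S).comp (AddMonoidHom.inl A (ι → ℤ))
    with hi0
  set p0 : (A × (ι → ℤ)) ⧸ S →+ (∀ i, ZMod (n i)) :=
    QuotientAddGroup.lift S (π.comp (AddMonoidHom.snd A (ι → ℤ)))
      (by rintro x ⟨w, rfl⟩; exact hπμ w) with hp0
  have hp0mk : ∀ x : A × (ι → ℤ), p0 (QuotientAddGroup.mk x) = π x.2 := fun x => rfl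
  have hi0mk : ∀ x : A, i0 x = QuotientAddGroup.mk (x, 0) := fun x => rfl
  -- injectivity
  have hinj : Function.Injective i0 := by
    rw [injective_iff_map_eq_zero]
    intro x hx
    rw [hi0mk, QuotientAddGroup.eq_zero_iff] at hx
    obtain ⟨w, hw⟩ := hx
    have hw2 : μ w = 0 := congrArg Prod.snd hw
    have hw0 : w = 0 := by
      funext i
      have h1 : (n i : ℤ) * w i = 0 := congrFun hw2 i
      have h2 : (n i : ℤ) ≠ 0 := by exact_mod_cast hnz i
      exact (mul_eq_zero.mp h1).resolve_left h2 |>.trans rfl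
    have hw1 : lamA w = x := congrArg Prod.fst hw
    rw [hw0, map_zero] at hw1
    exact hw1.symm
  -- surjectivity
  have hsurj : Function.Surjective p0 := by
    intro c
    refine ⟨QuotientAddGroup.mk (0, fun i => ((c i).val : ℤ)), ?_⟩
    rw [hp0mk]
    funext i
    show ((((c i).val : ℤ)) : ZMod (n i)) = c i
    push_cast
    exact ZMod.natCast_zmod_val _
  -- kernel
  have hker : ∀ b, p0 b = 0 ↔ b ∈ i0.range := by
    intro b
    induction b using QuotientAddGroup.induction_on with
    | H x =>
      constructor
      · intro hx
        rw [hp0mk] at hx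
        have hdvd : ∀ i, (n i : ℤ) ∣ x.2 i := fun i =>
          (ZMod.intCast_zmod_eq_zero_iff_dvd _ _).mp (congrFun hx i)
        choose w hw using hdvd
        refine ⟨x.1 - lamA w, ?_⟩
        rw [hi0mk, QuotientAddGroup.eq]
        refine ⟨w, ?_⟩
        have hμw : μ w = x.2 := funext fun i => (hw i).symm
        show (lamA w, μ w) = -(x.1 - lamA w, (0 : ι → ℤ)) + x
        rw [Prod.ext_iff]
        constructor
        · simp only [Prod.fst_add, Prod.fst_neg]
          abel
        · simp only [Prod.snd_add, Prod.snd_neg]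
          rw [hμw]
          abel
      · rintro ⟨y, hy⟩
        rw [← hy, hi0mk, hp0mk]
        exact map_zero π
  refine ⟨_, inferInstance, i0, p0, hinj, hsurj, hker, ?_⟩
  intro c hc b hb
  set v : ι → ℤ := fun i => ((c i).val : ℤ) with hv
  have hπv : π v = c := funext fun i => by
    show (((c i).val : ℤ) : ZMod (n i)) = c i
    push_cast
    exact ZMod.natCast_zmod_val _
  have key : ∀ i, ∃ t : ℕ, (c i).val = (n i / ℓ) * t ∧ ℓ * (c i).val = n i * t := fun i =>
    zmod_torsion_val hℓ (hn i) (c i) (congrFun hc i)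
  choose t ht1 ht2 using key
  set w : ι → ℤ := fun i => (t i : ℤ) with hwdef
  set b' : (A × (ι → ℤ)) ⧸ S := QuotientAddGroup.mk (0, v) with hb'
  have hμw : μ w = ℓ • v := funext fun i => by
    show (n i : ℤ) * (t i : ℤ) = ℓ • ((c i).val : ℤ)
    rw [nsmul_eq_mul]
    exact_mod_cast (ht2 i).symm
  have hsmulmk : ∀ (x : A × (ι → ℤ)) (m : ℕ),
      m • (QuotientAddGroup.mk x : (A × (ι → ℤ)) ⧸ S) = QuotientAddGroup.mk (m • x) :=
    fun x m => (map_nsmul (QuotientAddGroup.mk' S) m x).symm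
  have hib' : i0 (-(lamA w)) = ℓ • b' := by
    rw [hi0mk, hb', hsmulmk, QuotientAddGroup.eq]
    refine ⟨w, ?_⟩
    show (lamA w, μ w) = -(-(lamA w), (0 : ι → ℤ)) + ℓ • ((0 : A), v)
    rw [Prod.ext_iff]
    constructor
    · simp
    · simp [hμw]
  have hcsum : (⟨c, hc⟩ : ellTorsion ℓ (∀ i, ZMod (n i))) = ∑ i, t i • gen i := by
    apply Subtype.ext
    have hcoe : ((∑ i, t i • gen i : ellTorsion ℓ (∀ i, ZMod (n i))) : ∀ j, ZMod (n j))
        = ∑ i, t i • (gen i : ∀ j, ZMod (n j)) := by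
      rw [AddSubgroup.val_finset_sum]
      norm_cast
    rw [hcoe]
    have hgcoe : ∀ i, (gen i : ∀ j, ZMod (n j)) = Pi.single i ((n i / ℓ : ℕ) : ZMod (n i)) :=
      fun i => rfl
    have hsingle : ∀ i, t i • (gen i : ∀ j, ZMod (n j))
        = Pi.single i (t i • ((n i / ℓ : ℕ) : ZMod (n i))) := by
      intro i
      rw [hgcoe i, ← Pi.single_smul]
    simp only [hsingle]
    rw [Finset.univ_sum_single (fun j => t j • ((n j / ℓ : ℕ) : ZMod (n j)))]
    funext j
    show c j = t j • ((n j / ℓ : ℕ) : ZMod (n j))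
    rw [nsmul_eq_mul, ← Nat.cast_mul, mul_comm, ← ht1 j, ZMod.natCast_zmod_val]
  have ha' : ∀ i, QuotientAddGroup.mk' (ellMultiples ℓ A) (a i) = -(f (gen i)) := ha
  have hq : (QuotientAddGroup.mk (-(lamA w)) : A ⧸ ellMultiples ℓ A) = f ⟨c, hc⟩ := by
    rw [hcsum, map_sum]
    have hrepr : (QuotientAddGroup.mk (-(lamA w)) : A ⧸ ellMultiples ℓ A)
        = QuotientAddGroup.mk' (ellMultiples ℓ A) (-(∑ i, (t i : ℤ) • a i)) := rfl
    rw [hrepr, map_neg, map_sum]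
    simp only [map_zsmul, ha', map_nsmul, natCast_zsmul, smul_neg, neg_neg,
      Finset.sum_neg_distrib]
  have hp0b' : p0 b' = c := by rw [hb', hp0mk]; exact hπv
  have hdiff : p0 (b - b') = 0 := by rw [map_sub, hb, hp0b', sub_self]
  obtain ⟨a'', ha''⟩ := (hker _).mp hdiff
  refine ⟨-(lamA w) + ℓ • a'', ?_, ?_⟩
  · rw [map_add, hib', map_nsmul, ha'']
    have hb2 : b' + (b - b') = b := by abel
    calc ℓ • b' + ℓ • (b - b') = ℓ • (b' + (b - b')) := (nsmul_add b' (b - b') ℓ).symm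
      _ = ℓ • b := by rw [hb2]
  · have hmem : ℓ • a'' ∈ ellMultiples ℓ A := ⟨a'', by simp [ellMultiples]⟩
    have h0 : (QuotientAddGroup.mk (ℓ • a'') : A ⧸ ellMultiples ℓ A) = 0 :=
      (QuotientAddGroup.eq_zero_iff _).mpr hmem
    rw [show ((QuotientAddGroup.mk (-(lamA w) + ℓ • a'') : A ⧸ ellMultiples ℓ A))
        = QuotientAddGroup.mk (-(lamA w)) + QuotientAddGroup.mk (ℓ • a'')
      from map_add (QuotientAddGroup.mk' (ellMultiples ℓ A)) _ _, hq, h0, add_zero]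

/-- Let `ℓ` be a prime, `A` an abelian group and `C` a finite abelian `ℓ`-group. For
every homomorphism `f : C[ℓ] → A/ℓA` there is a short exact sequence
`0 → A → B → C → 0` whose connecting homomorphism `δ_ℓ : C[ℓ] → A/ℓA` (obtained by
applying `Hom(ℤ/ℓℤ, -)`) equals `f`; i.e. `Ext¹(C, A) → Hom(C[ℓ], A/ℓA)` is surjective. -/
theorem connecting_map_surjective (ℓ : ℕ) (hℓ : ℓ.Prime)
    (A : Type) [AddCommGroup A]
    (C : Type) [AddCommGroup C] [Finite C] (hC : ∃ n : ℕ, Nat.card C = ℓ ^ n)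
    (f : ellTorsion ℓ C →+ A ⧸ ellMultiples ℓ A) :
    ∃ (B : Type) (_ : AddCommGroup B) (i : A →+ B) (p : B →+ C),
      Function.Injective i ∧ Function.Surjective p ∧
      (∀ b : B, p b = 0 ↔ b ∈ i.range) ∧
      ∀ (c : C) (hc : ℓ • c = 0) (b : B), p b = c →
        ∃ a : A, i a = ℓ • b ∧
          (QuotientAddGroup.mk a : A ⧸ ellMultiples ℓ A) = f ⟨c, hc⟩ := by
  classical
  obtain ⟨ι, hι, n, hlt, ⟨E0⟩⟩ := AddCommGroup.equiv_directSum_zmod_of_finite' C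
  let E : C ≃+ (∀ i, ZMod (n i)) := E0.trans (DirectSum.addEquivProd (fun i => ZMod (n i)))
  obtain ⟨N, hN⟩ := hC
  haveI : ∀ i, NeZero (n i) := fun i => ⟨by have := hlt i; omega⟩
  have hcard : ∏ i, n i = ℓ ^ N := by
    calc ∏ i, n i = ∏ i, Nat.card (ZMod (n i)) := by simp [Nat.card_zmod]
      _ = Nat.card (∀ i, ZMod (n i)) := Nat.card_pi.symm
      _ = Nat.card C := (Nat.card_congr E.toEquiv).symm
      _ = ℓ ^ N := hN
  have hn : ∀ i, ∃ k, n i = ℓ ^ k := fun i => by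
    have hdvd : n i ∣ ℓ ^ N := hcard ▸ Finset.dvd_prod_of_mem n (Finset.mem_univ i)
    obtain ⟨k, -, hk⟩ := (Nat.dvd_prime_pow hℓ).mp hdvd
    exact ⟨k, hk⟩
  let res : ellTorsion ℓ (∀ i, ZMod (n i)) →+ ellTorsion ℓ C :=
    { toFun := fun x => ⟨E.symm x.1, by
        show ℓ • E.symm x.1 = 0
        rw [← map_nsmul]
        have hx : ℓ • (x : ∀ i, ZMod (n i)) = 0 := x.2
        rw [hx, map_zero]⟩
      map_zero' := by ext; simp
      map_add' := by intro x y; ext; simp }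
  obtain ⟨B, instB, i0, p0, h1, h2, h3, h4⟩ := aux_pi ℓ hℓ A ι n hn (f.comp res)
  refine ⟨B, instB, i0, (AddEquiv.toAddMonoidHom E.symm).comp p0, h1, ?_, ?_, ?_⟩
  · exact E.symm.surjective.comp h2
  · intro b
    rw [AddMonoidHom.comp_apply, AddEquiv.coe_toAddMonoidHom, AddEquiv.map_eq_zero_iff]
    exact h3 b
  · intro c hc b hb
    rw [AddMonoidHom.comp_apply, AddEquiv.coe_toAddMonoidHom] at hb
    have hb' : p0 b = E c := by
      have h5 := congrArg E hb
      rwa [E.apply_symm_apply] at h5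
    have hc' : ℓ • (E c) = 0 := by rw [← map_nsmul, hc, map_zero]
    obtain ⟨a, ha1, ha2⟩ := h4 (E c) hc' b hb'
    refine ⟨a, ha1, ?_⟩
    rw [ha2, AddMonoidHom.comp_apply]
    congr 1
    apply Subtype.ext
    show E.symm (E c) = c
    exact E.symm_apply_apply c
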